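/- Let p be a prime, and let H and H' be finite graphs, neither of which has an automorphism of order p. If for every graph G the number of homomorphisms from G to H is congruent modulo p to the number of homomorphisms from G to H', then H and H' are isomorphic. -/

import Mathlib

structure SymGraph (V : Type) where
  Adj : V → V → Prop
  symm : ∀ u v, Adj u v → Adj v u

def SymGraph.IsHom {V W : Type} (G : SymGraph V) (H : SymGraph W) (f : V → W) : Prop :=
  ∀ u v, G.Adj u v → H.Adj (f u) (f v)

noncomputable def homCount {V W : Type} (G : SymGraph V) (H : SymGraph W) : ℕ :=
  Nat.card {f : V → W // G.IsHom H f}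

def SymGraph.IsAut {V : Type} (H : SymGraph V) (σ : Equiv.Perm V) : Prop :=
  ∀ u v, H.Adj u v ↔ H.Adj (σ u) (σ v)

def SymGraph.fixedSubgraph {V : Type} (H : SymGraph V) (σ : Equiv.Perm V) :
    SymGraph {v : V // σ v = v} :=
  ⟨fun u v => H.Adj u v, fun u v h => H.symm u v h⟩

/-! ### Auxiliary development -/

noncomputable def injHomCount {U V : Type} (G : SymGraph U) (H : SymGraph V) : ℕ :=
  Nat.card {f : U → V // G.IsHom H f ∧ Function.Injective f}

lemma SymGraph.isHom_comp {U V W : Type} {G : SymGraph U} {H : SymGraph V} {K : SymGraph W}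
    {f : U → V} {g : V → W} (hf : G.IsHom H f) (hg : H.IsHom K g) :
    G.IsHom K (g ∘ f) := fun u v h => hg _ _ (hf u v h)

/-- Quotient graph by a setoid. -/
def SymGraph.quot {U : Type} (G : SymGraph U) (s : Setoid U) : SymGraph (Quotient s) where
  Adj x y := ∃ u v, Quotient.mk s u = x ∧ Quotient.mk s v = y ∧ G.Adj u v
  symm := by
    rintro x y ⟨u, v, hu, hv, h⟩
    exact ⟨v, u, hv, hu, G.symm _ _ h⟩

instance setoidFinite {U : Type} [Finite U] : Finite (Setoid U) := by
  have : Function.Injective (fun s : Setoid U => s.r) := by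
    intro s t h
    exact Setoid.ext fun a b => iff_of_eq (congrFun (congrFun h a) b)
  exact Finite.of_injective _ this

noncomputable instance setoidFintype {U : Type} [Finite U] : Fintype (Setoid U) :=
  Fintype.ofFinite _

lemma nat_card_sigma {ι : Type} [Fintype ι] (f : ι → Type) [∀ i, Finite (f i)] :
    Nat.card (Σ i, f i) = ∑ i : ι, Nat.card (f i) := by
  letI := fun i => Fintype.ofFinite (f i)
  simp [Nat.card_eq_fintype_card, Fintype.card_sigma]

/-- The key counting identity: homs are partitioned by their kernel. -/
lemma homCount_eq_sum {U V : Type} [Finite U] [Finite V] (G : SymGraph U) (H : SymGraph V) :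
    homCount G H = ∑ s : Setoid U, injHomCount (G.quot s) H := by
  classical
  have key : Function.Bijective
      (fun x : Σ s : Setoid U,
          {g : Quotient s → V // (G.quot s).IsHom H g ∧ Function.Injective g} =>
        (⟨x.2.1 ∘ Quotient.mk x.1, by
          intro u v h
          exact x.2.2.1 _ _ ⟨u, v, rfl, rfl, h⟩⟩ : {f : U → V // G.IsHom H f})) := by
    constructor
    · rintro ⟨s₁, g₁, hg₁, hi₁⟩ ⟨s₂, g₂, hg₂, hi₂⟩ h
      have hfun : (fun a => g₁ (Quotient.mk s₁ a)) = fun a => g₂ (Quotient.mk s₂ a) := by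
        have := congrArg Subtype.val h
        exact this
      have hs : s₁ = s₂ := by
        apply Setoid.ext
        intro a b
        constructor
        · intro hr
          have h1 : g₂ (Quotient.mk s₂ a) = g₂ (Quotient.mk s₂ b) := by
            rw [← congrFun hfun a, ← congrFun hfun b]
            exact congrArg g₁ (Quotient.sound hr)
          exact Quotient.exact (hi₂ h1)
        · intro hr
          have h1 : g₁ (Quotient.mk s₁ a) = g₁ (Quotient.mk s₁ b) := by
            rw [congrFun hfun a, congrFun hfun b]
            exact congrArg g₂ (Quotient.sound hr)
          exact Quotient.exact (hi₁ h1)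
      subst hs
      have hg : g₁ = g₂ := by
        funext x
        induction x using Quotient.ind with
        | _ a => exact congrFun hfun a
      subst hg
      rfl
    · rintro ⟨f, hf⟩
      refine ⟨⟨Setoid.ker f, Quotient.lift f (fun a b h => h), ?_, ?_⟩, rfl⟩
      · rintro x y ⟨u, v, rfl, rfl, h⟩
        exact hf u v h
      · rintro ⟨a⟩ ⟨b⟩ h
        exact Quotient.sound h
  have := Nat.card_eq_of_bijective _ key
  rw [homCount, ← this, nat_card_sigma]
  rfl

/-- Invariance of the injective hom count under isomorphism of the source. -/
lemma injHomCount_congr {U U' V : Type} (e : U' ≃ U) (G : SymGraph U) (G' : SymGraph U')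
    (H : SymGraph V) (hAdj : ∀ x y, G'.Adj x y ↔ G.Adj (e x) (e y)) :
    injHomCount G' H = injHomCount G H := by
  apply Nat.card_congr
  refine ⟨fun f => ⟨f.1 ∘ e.symm, ?_, ?_⟩, fun f => ⟨f.1 ∘ e, ?_, ?_⟩, ?_, ?_⟩
  · intro u v h
    exact f.2.1 _ _ ((hAdj _ _).2 (by simpa using h))
  · exact f.2.2.comp e.symm.injective
  · intro u v h
    exact f.2.1 _ _ ((hAdj u v).1 h)
  · exact f.2.2.comp e.injective
  · rintro ⟨f, hf⟩; ext x; simp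
  · rintro ⟨f, hf⟩; ext x; simp

lemma card_quot_lt {U : Type} [Finite U] {s : Setoid U} (hs : s ≠ ⊥) :
    Nat.card (Quotient s) < Nat.card U := by
  classical
  letI := Fintype.ofFinite U
  have hsurj : Function.Surjective (Quotient.mk s) := Quotient.mk''_surjective
  have hle : Nat.card (Quotient s) ≤ Nat.card U := Nat.card_le_card_of_surjective _ hsurj
  refine lt_of_le_of_ne hle ?_
  intro hcard
  apply hs
  have hinj : Function.Injective (Quotient.mk s) := by
    letI : Fintype (Quotient s) := Fintype.ofFinite _
    have : Fintype.card U = Fintype.card (Quotient s) := by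
      rw [← Nat.card_eq_fintype_card, ← Nat.card_eq_fintype_card, hcard]
    exact ((Fintype.bijective_iff_surjective_and_card _).2 ⟨hsurj, this⟩).1
  apply le_antisymm _ bot_le
  intro a b hab
  exact hinj (Quotient.sound hab)

def quotBotEquiv {U : Type} : Quotient (⊥ : Setoid U) ≃ U where
  toFun := Quotient.lift id (fun a b h => h)
  invFun := Quotient.mk _
  left_inv := by rintro ⟨a⟩; rfl
  right_inv := fun a => rfl

lemma injHomCount_quot_bot {U V : Type} (G : SymGraph U) (H : SymGraph V) :
    injHomCount (G.quot (⊥ : Setoid U)) H = injHomCount G H := by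
  apply injHomCount_congr quotBotEquiv
  rintro x y
  constructor
  · rintro ⟨u, v, rfl, rfl, h⟩
    exact h
  · intro h
    induction x using Quotient.ind with
    | _ a =>
      induction y using Quotient.ind with
      | _ b => exact ⟨a, b, rfl, rfl, h⟩

section Main

variable {p : ℕ} {V W : Type} [Finite V] [Finite W] {H : SymGraph V} {H' : SymGraph W}

lemma inj_modEq (hhom : ∀ (U : Type) [Fintype U] (G : SymGraph U),
      homCount G H ≡ homCount G H' [MOD p]) :
    ∀ (n : ℕ) (U : Type) [Finite U] (G : SymGraph U), Nat.card U < n →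
      ((injHomCount G H : ZMod p) = injHomCount G H') := by
  intro n
  induction n with
  | zero => intro U _ G h; omega
  | succ n ih =>
    intro U _ G hcard
    classical
    letI := Fintype.ofFinite U
    have hmod : (homCount G H : ZMod p) = homCount G H' := by
      rw [ZMod.natCast_eq_natCast_iff]
      exact hhom U G
    rw [homCount_eq_sum G H, homCount_eq_sum G H'] at hmod
    push_cast at hmod
    have hbot : (⊥ : Setoid U) ∈ (Finset.univ : Finset (Setoid U)) := Finset.mem_univ _
    rw [← Finset.add_sum_erase _ _ hbot, ← Finset.add_sum_erase _ _ hbot] at hmod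
    have hrest : ∑ s ∈ Finset.univ.erase (⊥ : Setoid U),
        ((injHomCount (G.quot s) H : ZMod p))
        = ∑ s ∈ Finset.univ.erase (⊥ : Setoid U), ((injHomCount (G.quot s) H' : ZMod p)) := by
      apply Finset.sum_congr rfl
      intro s hsmem
      have hs : s ≠ ⊥ := (Finset.mem_erase.1 hsmem).1
      exact ih (Quotient s) (G.quot s) (lt_of_lt_of_le (card_quot_lt hs) (by omega))
    rw [hrest] at hmod
    have := add_right_cancel hmod
    rwa [injHomCount_quot_bot, injHomCount_quot_bot] at this

/-- The automorphisms of a graph form a subgroup of the permutation group. -/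
def SymGraph.autSubgroup {V : Type} (H : SymGraph V) : Subgroup (Equiv.Perm V) where
  carrier := {σ | H.IsAut σ}
  one_mem' := fun u v => Iff.rfl
  mul_mem' := by
    intro σ τ hσ hτ u v
    exact (hτ u v).trans (hσ (τ u) (τ v))
  inv_mem' := by
    intro σ hσ u v
    have := hσ (σ⁻¹ u) (σ⁻¹ v)
    simpa using this.symm

/-- An injective self-hom of a finite graph is an automorphism. -/
lemma injective_hom_isAut {V : Type} [Finite V] (H : SymGraph V) (f : V → V)
    (hf : H.IsHom H f) (hinj : Function.Injective f) :
    ∃ σ : Equiv.Perm V, H.IsAut σ ∧ ⇑σ = f := by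
  have hbij : Function.Bijective f := Finite.injective_iff_bijective.1 hinj
  let σ : Equiv.Perm V := Equiv.ofBijective f hbij
  have hσf : ⇑σ = f := rfl
  -- every iterate of f is a hom
  have hiter : ∀ k, H.IsHom H (f^[k]) := by
    intro k
    induction k with
    | zero => intro u v h; simpa using h
    | succ k ihk =>
      intro u v h
      rw [Function.iterate_succ']
      exact hf _ _ (ihk u v h)
  have hfin : ∃ m : ℕ, 0 < m ∧ σ ^ m = 1 := by
    refine ⟨orderOf σ, ?_, pow_orderOf_eq_one σ⟩
    exact orderOf_pos σ
  obtain ⟨m, hm, hσm⟩ := hfin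
  have hinvpow : σ⁻¹ = σ ^ (m - 1) := by
    have h1 : σ ^ (m - 1) * σ = 1 := by
      rw [← pow_succ, Nat.sub_add_cancel hm]
      exact hσm
    exact inv_eq_of_mul_eq_one_left h1
  have hpow_iter : ∀ k, ⇑(σ ^ k) = f^[k] := by
    intro k
    induction k with
    | zero => simp
    | succ k ihk =>
      rw [pow_succ']
      funext x
      simp [Equiv.Perm.mul_apply, ihk, hσf, Function.iterate_succ_apply']
  have hinv_hom : H.IsHom H ⇑σ⁻¹ := by
    rw [hinvpow, hpow_iter]
    exact hiter (m - 1)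
  refine ⟨σ, ?_, rfl⟩
  intro u v
  constructor
  · intro h; exact hf u v h
  · intro h
    have := hinv_hom _ _ h
    simpa using this

lemma injHomCount_self_eq_card_aut {V : Type} [Finite V] (H : SymGraph V) :
    injHomCount H H = Nat.card H.autSubgroup := by
  apply Nat.card_congr
  refine ⟨fun f => ⟨Equiv.ofBijective f.1 (Finite.injective_iff_bijective.1 f.2.2), ?_⟩,
    fun σ => ⟨⇑σ.1, fun u v h => (σ.2 u v).1 h, σ.1.injective⟩, ?_, ?_⟩
  · obtain ⟨σ, hσ, hσf⟩ := injective_hom_isAut H f.1 f.2.1 f.2.2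
    have : Equiv.ofBijective f.1 (Finite.injective_iff_bijective.1 f.2.2) = σ := by
      apply Equiv.ext
      intro x
      rw [hσf]
      rfl
    rw [this]
    exact hσ
  · rintro ⟨f, hf⟩; rfl
  · rintro ⟨σ, hσ⟩
    apply Subtype.ext
    apply Equiv.coe_fn_injective
    rfl

lemma not_dvd_card_aut {V : Type} [Finite V] (H : SymGraph V) (hp : p.Prime)
    (hH : ¬∃ σ : Equiv.Perm V, H.IsAut σ ∧ orderOf σ = p) :
    ¬ (p ∣ injHomCount H H) := by
  rw [injHomCount_self_eq_card_aut]
  intro hdvd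
  haveI : Fact p.Prime := ⟨hp⟩
  obtain ⟨σ, hσ⟩ := exists_prime_orderOf_dvd_card' (G := H.autSubgroup) p hdvd
  exact hH ⟨(σ : Equiv.Perm V), σ.2, by rwa [Subgroup.orderOf_coe]⟩

end Main

/-- If H, H' have no automorphisms of order p and the same mod-p Lovász vector,
then they are isomorphic. -/
theorem stmt3 (p : ℕ) (hp : p.Prime) {V W : Type} [Fintype V] [Fintype W]
    (H : SymGraph V) (H' : SymGraph W)
    (hH : ¬∃ σ : Equiv.Perm V, H.IsAut σ ∧ orderOf σ = p)
    (hH' : ¬∃ σ : Equiv.Perm W, H'.IsAut σ ∧ orderOf σ = p)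
    (hhom : ∀ (U : Type) [Fintype U] (G : SymGraph U),
      homCount G H ≡ homCount G H' [MOD p]) :
    ∃ e : V ≃ W, ∀ u v, H.Adj u v ↔ H'.Adj (e u) (e v) := by
  classical
  haveI : Fact p.Prime := ⟨hp⟩
  have hinj : ∀ (U : Type) [Finite U] (G : SymGraph U),
      ((injHomCount G H : ZMod p) = injHomCount G H') := by
    intro U _ G
    exact inj_modEq hhom (Nat.card U + 1) U G (by omega)
  -- injective hom H → H' exists
  have h1 : injHomCount H H' ≠ 0 := by
    intro h0
    apply not_dvd_card_aut H hp hH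
    have := hinj V H
    rw [h0] at this
    rw [← ZMod.natCast_eq_zero_iff]
    simpa using this
  -- injective hom H' → H exists
  have hhom' : ∀ (U : Type) [Fintype U] (G : SymGraph U),
      homCount G H' ≡ homCount G H [MOD p] := fun U _ G => (hhom U G).symm
  have hinj' : ∀ (U : Type) [Finite U] (G : SymGraph U),
      ((injHomCount G H' : ZMod p) = injHomCount G H) := by
    intro U _ G
    exact inj_modEq hhom' (Nat.card U + 1) U G (by omega)
  have h2 : injHomCount H' H ≠ 0 := by
    intro h0
    apply not_dvd_card_aut H' hp hH'
    have := hinj' W H'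
    rw [h0] at this
    rw [← ZMod.natCast_eq_zero_iff]
    simpa using this
  -- extract the homs
  have hne1 : Nonempty {f : V → W // H.IsHom H' f ∧ Function.Injective f} :=
    (Nat.card_pos_iff.mp (Nat.pos_of_ne_zero h1)).1
  have hne2 : Nonempty {g : W → V // H'.IsHom H g ∧ Function.Injective g} :=
    (Nat.card_pos_iff.mp (Nat.pos_of_ne_zero h2)).1
  obtain ⟨f, hf, hfinj⟩ := hne1
  obtain ⟨g, hg, hginj⟩ := hne2
  have hcard : Fintype.card V = Fintype.card W :=
    le_antisymm (Fintype.card_le_of_injective f hfinj) (Fintype.card_le_of_injective g hginj)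
  have hbij : Function.Bijective f :=
    (Fintype.bijective_iff_injective_and_card f).2 ⟨hfinj, hcard⟩
  refine ⟨Equiv.ofBijective f hbij, fun u v => ?_⟩
  obtain ⟨σ, hσ, hσgf⟩ := injective_hom_isAut H (g ∘ f) (SymGraph.isHom_comp hf hg)
    (hginj.comp hfinj)
  constructor
  · intro h
    exact hf u v h
  · intro h
    have h2' : H.Adj (g (f u)) (g (f v)) := hg _ _ h
    have h3 : H.Adj (σ u) (σ v) := by
      rw [congrFun hσgf u, congrFun hσgf v]
      exact h2'
    exact (hσ u v).2 h3
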